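/- arXiv:2210.03512 — 4 statements merged into one kernel-verified Lean document; each statement's English description precedes it below -/
import Mathlib

section
/- Let p be a probability measure on a measurable space X, let α > 0, and let f : X → ℝ be measurable with Z_α := ∫ exp(−α f(x)) dp(x) finite and positive. Define the Gibbs posterior q_α as the probability measure with density exp(−α f)/Z_α with respect to p. Then q_α minimizes the regularized objective: for every probability measure q absolutely continuous with respect to p such that f is q-integrable and KL(q‖p) is finite, one has ∫ f dq_α + (1/α)·KL(q_α‖p) ≤ ∫ f dq + (1/α)·KL(q‖p). -/
open MeasureTheory

/-- Kullback–Leibler divergence `∫ log (dq/dp) dq` of `q` with respect to `p` (real-valued,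
meaningful when `q ≪ p` and the integrand is `q`-integrable, i.e. the KL divergence is finite). -/
noncomputable def KL {X : Type*} [MeasurableSpace X] (q p : Measure X) : ℝ :=
  ∫ x, Real.log ((q.rnDeriv p x).toReal) ∂q

open Real in
/-- Gibbs' inequality: the KL divergence is nonnegative. -/
lemma aux_integral_llr_nonneg {X : Type*} [MeasurableSpace X] {μ ν : Measure X}
    [IsProbabilityMeasure μ] [IsProbabilityMeasure ν] (hμν : μ ≪ ν)
    (h : Integrable (llr μ ν) μ) : 0 ≤ ∫ x, llr μ ν x ∂μ := by
  have h_int : Integrable (fun x ↦ (ν.rnDeriv μ x).toReal) μ :=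
    Measure.integrable_toReal_rnDeriv
  have h_exp : Integrable (fun x ↦ exp (-llr μ ν x)) μ :=
    h_int.congr (exp_neg_llr hμν).symm
  have hjensen : exp (∫ x, -llr μ ν x ∂μ) ≤ ∫ x, exp (-llr μ ν x) ∂μ :=
    convexOn_exp.map_integral_le continuous_exp.continuousOn isClosed_univ
      (Filter.Eventually.of_forall fun _ ↦ trivial) h.neg h_exp
  have h_le1 : ∫ x, exp (-llr μ ν x) ∂μ ≤ 1 := by
    rw [integral_congr_ae (exp_neg_llr hμν)]
    calc ∫ x, (ν.rnDeriv μ x).toReal ∂μ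
        = ∫ x in Set.univ, (ν.rnDeriv μ x).toReal ∂μ := by rw [setIntegral_univ]
      _ ≤ (ν Set.univ).toReal :=
          Measure.setIntegral_toReal_rnDeriv_le (measure_ne_top ν _)
      _ = 1 := by simp
  have : exp (∫ x, -llr μ ν x ∂μ) ≤ 1 := hjensen.trans h_le1
  rw [exp_le_one_iff, integral_neg, neg_nonpos] at this
  exact this

/-- The Gibbs posterior `q_α`, with density `exp(-α f)/Z_α` with respect to the prior `p`,
minimizes the regularized objective `∫ f dq + (1/α) KL(q‖p)` over all probability measures
`q ≪ p` with `f` `q`-integrable and finite `KL(q‖p)`. -/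
theorem gibbs_posterior_minimizes_regularized_objective
    {X : Type*} [MeasurableSpace X] (p : Measure X) [IsProbabilityMeasure p]
    (α : ℝ) (hα : 0 < α) (f : X → ℝ) (hf : Measurable f)
    (hint : Integrable (fun x => Real.exp (-α * f x)) p)
    (Zα : ℝ) (hZα : Zα = ∫ x, Real.exp (-α * f x) ∂p) (hZpos : 0 < Zα)
    (qα : Measure X)
    (hqα : qα = p.withDensity (fun x => ENNReal.ofReal (Real.exp (-α * f x) / Zα)))
    (hfqα : Integrable f qα) :
    ∀ q : Measure X, IsProbabilityMeasure q → q ≪ p →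
      Integrable f q →
      Integrable (fun x => Real.log ((q.rnDeriv p x).toReal)) q →
      ∫ x, f x ∂qα + (1 / α) * KL qα p ≤ ∫ x, f x ∂q + (1 / α) * KL q p := by
  intro q hq hqp hfq hllrq
  have hα' : α ≠ 0 := ne_of_gt hα
  set g : X → ℝ := fun x ↦ -α * f x with hg
  have hqα_tilted : qα = p.tilted g := by
    rw [hqα, Measure.tilted, hZα]
  have hqαP : IsProbabilityMeasure qα := by
    rw [hqα_tilted]; exact isProbabilityMeasure_tilted hint
  have hqαp : qα ≪ p := hqα_tilted ▸ tilted_absolutelyContinuous p g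
  have hpqα : p ≪ qα := hqα_tilted ▸ absolutelyContinuous_tilted hint
  have hqqα : q ≪ qα := hqp.trans hpqα
  -- KL of the Gibbs posterior
  have hKLqα : KL qα p = -α * ∫ x, f x ∂qα - Real.log Zα := by
    have h1 : (fun x ↦ Real.log ((qα.rnDeriv p x).toReal))
        =ᵐ[p] fun x ↦ g x - Real.log Zα := by
      rw [hqα_tilted, hZα]; exact log_rnDeriv_tilted_left_self hint
    have h2 : (fun x ↦ Real.log ((qα.rnDeriv p x).toReal))
        =ᵐ[qα] fun x ↦ g x - Real.log Zα := hqαp.ae_le h1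
    have hgqα : Integrable g qα := hfqα.const_mul (-α)
    rw [KL, integral_congr_ae h2, integral_sub hgqα (integrable_const _),
      integral_const, probReal_univ]
    simp only [hg, integral_const_mul, ENNReal.toReal_one, one_smul]
  -- KL of q decomposes via the chain rule for llr
  have hgq : Integrable g q := hfq.const_mul (-α)
  have hllrq' : Integrable (llr q p) q := hllrq
  have hdecomp : ∫ x, llr q (p.tilted g) x ∂q
      = ∫ x, llr q p x ∂q - ∫ x, g x ∂q + Real.log (∫ x, Real.exp (g x) ∂p) :=
    integral_llr_tilted_right hqp hgq hint hllrq'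
  have hllrqqα : Integrable (llr q qα) q := by
    rw [hqα_tilted]
    exact integrable_llr_tilted_right hqp hgq hllrq' hint
  have hnonneg : 0 ≤ ∫ x, llr q qα x ∂q := aux_integral_llr_nonneg hqqα hllrqqα
  have hKLq : KL q p = ∫ x, llr q qα x ∂q + (-α * ∫ x, f x ∂q) - Real.log Zα := by
    have : ∫ x, llr q qα x ∂q
        = ∫ x, llr q p x ∂q - ∫ x, g x ∂q + Real.log Zα := by
      rw [hqα_tilted, hdecomp, hZα]
    have hKL : KL q p = ∫ x, llr q p x ∂q := rfl
    simp only [hg, integral_const_mul] at this ⊢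
    rw [hKL]
    linarith
  rw [hKLqα, hKLq]
  have h1 : (1 / α) * (-α * ∫ x, f x ∂qα - Real.log Zα)
      = -(∫ x, f x ∂qα) - (1 / α) * Real.log Zα := by
    field_simp
  have h2 : (1 / α) * (∫ x, llr q qα x ∂q + (-α * ∫ x, f x ∂q) - Real.log Zα)
      = (1 / α) * ∫ x, llr q qα x ∂q - (∫ x, f x ∂q) - (1 / α) * Real.log Zα := by
    field_simp; ring
  rw [h1, h2]
  have h3 : 0 ≤ (1 / α) * ∫ x, llr q qα x ∂q :=
    mul_nonneg (le_of_lt (one_div_pos.mpr hα)) hnonneg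
  linarith
end

section
/- (Importance sampling concentration inequality.) Let p and q be probability measures on a measurable space X with q absolutely continuous with respect to p, with importance weight w = dq/dp, and suppose the exponentiated Rényi-2 divergence d₂(q‖p) = ∫ (dq/dp)² dp is finite. Let X₁, …, X_N be i.i.d. random variables with law p, and let f : X → ℝ be a bounded measurable function with sup norm ‖f‖_∞ < ∞. Then for any 0 < δ ≤ 1 and N ≥ 1, with probability at least 1 − δ: ∫ f dq ≥ (1/N)·Σ_{i=1}^N w(X_i) f(X_i) − ‖f‖_∞ · √((1 − δ)·d₂(q‖p) / (δ·N)). -/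
open MeasureTheory

/-- Importance sampling concentration inequality: if `q ≪ p` with importance weight
`w = dq/dp` and finite exponentiated Rényi-2 divergence `d₂ = ∫ w² dp`, and `X₁, …, X_N`
are i.i.d. with law `p`, then for any bounded measurable `f` (with `|f| ≤ C = ‖f‖_∞`) and
any `0 < δ ≤ 1`, with probability at least `1 - δ`,
`∫ f dq ≥ (1/N) ∑ᵢ w(Xᵢ) f(Xᵢ) - C √((1-δ) d₂ / (δ N))`. -/
theorem importance_sampling_concentration
    {X : Type*} [mX : MeasurableSpace X] (p q : Measure X)
    [IsProbabilityMeasure p] [IsProbabilityMeasure q] (hqp : q ≪ p)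
    (w : X → ℝ) (hw : w = fun x => (q.rnDeriv p x).toReal)
    (d₂ : ℝ) (hd₂ : d₂ = ∫ x, (w x) ^ 2 ∂p)
    (hd₂fin : Integrable (fun x => (w x) ^ 2) p)
    {Ω : Type*} [MeasurableSpace Ω] (μ : Measure Ω) [IsProbabilityMeasure μ]
    (N : ℕ) (hN : 1 ≤ N)
    (Xs : Fin N → Ω → X) (hmeas : ∀ i, Measurable (Xs i))
    (hindep : ProbabilityTheory.iIndepFun Xs μ)
    (hlaw : ∀ i, μ.map (Xs i) = p)
    (f : X → ℝ) (hf : Measurable f) (C : ℝ) (hfC : ∀ x, |f x| ≤ C)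
    (δ : ℝ) (hδ : 0 < δ) (hδ1 : δ ≤ 1) :
    ENNReal.ofReal (1 - δ) ≤
      μ {ω | (1 / (N : ℝ)) * ∑ i, w (Xs i ω) * f (Xs i ω)
              - C * Real.sqrt ((1 - δ) * d₂ / (δ * N)) ≤ ∫ x, f x ∂q} := by
  classical
  -- trivial case δ = 1
  rcases eq_or_lt_of_le hδ1 with hδ1' | hδlt
  · simp [← hδ1']
  -- basic facts
  have hwmeas : Measurable w := by
    rw [hw]; exact (Measure.measurable_rnDeriv q p).ennreal_toReal
  have hwnn : ∀ x, 0 ≤ w x := by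
    intro x; rw [hw]; exact ENNReal.toReal_nonneg
  have hNpos : (0:ℝ) < N := by exact_mod_cast hN
  -- trivial case C = 0 (then f ≡ 0)
  have hXne : Nonempty X := by
    by_contra h
    rw [not_nonempty_iff] at h
    have h1 : p Set.univ = 1 := measure_univ
    rw [Set.univ_eq_empty_iff.mpr h, measure_empty] at h1
    exact zero_ne_one h1
  have hCnn : 0 ≤ C := le_trans (abs_nonneg _) (hfC (Classical.arbitrary X))
  rcases eq_or_lt_of_le hCnn with hC0 | hCpos
  · have hf0 : ∀ x, f x = 0 := by
      intro x
      have := hfC x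
      rw [← hC0] at this
      exact abs_eq_zero.mp (le_antisymm this (abs_nonneg _))
    have hset : {ω | (1 / (N : ℝ)) * ∑ i, w (Xs i ω) * f (Xs i ω)
              - C * Real.sqrt ((1 - δ) * d₂ / (δ * N)) ≤ ∫ x, f x ∂q} = Set.univ := by
      ext ω
      simp [hf0, ← hC0]
    rw [hset, measure_univ]
    exact ENNReal.ofReal_le_one.mpr (by linarith)
  -- `d₂ ≥ 1`
  have hwint : Integrable w p := by
    rw [hw]; exact Measure.integrable_toReal_rnDeriv
  have hEw : ∫ x, w x ∂p = 1 := by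
    rw [hw, Measure.integral_toReal_rnDeriv hqp, probReal_univ]
  have hd₂1 : 1 ≤ d₂ := by
    have h0 : 0 ≤ ∫ x, (w x - 1)^2 ∂p := integral_nonneg fun x => sq_nonneg _
    have hexp : ∫ x, (w x - 1)^2 ∂p = d₂ - 2 + 1 := by
      have heq : ∀ x, (w x - 1)^2 = w x ^ 2 - 2 * w x + 1 := fun x => by ring
      simp_rw [heq]
      have hint1 : Integrable (fun x => w x ^ 2 - 2 * w x) p := hd₂fin.sub (hwint.const_mul 2)
      have hint2 : Integrable (fun x => (2:ℝ) * w x) p := hwint.const_mul 2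
      rw [integral_add hint1 (integrable_const 1),
        integral_sub hd₂fin hint2, integral_const_mul, hEw,
        integral_const, probReal_univ]
      simp [hd₂]
    linarith
  have hd₂pos : 0 < d₂ := by linarith
  have h1δ : (1:ℝ) - δ ≠ 0 := by linarith
  -- abstract the threshold t and the mean m
  obtain ⟨t, ht_def⟩ : ∃ t : ℝ, t = C * Real.sqrt ((1 - δ) * d₂ / (δ * N)) := ⟨_, rfl⟩
  obtain ⟨m, hm_def⟩ : ∃ m : ℝ, m = ∫ x, f x ∂q := ⟨_, rfl⟩
  rw [← ht_def, ← hm_def]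
  have harg : 0 < (1 - δ) * d₂ / (δ * N) := by
    apply div_pos (mul_pos (by linarith) hd₂pos) (by positivity)
  have htpos : 0 < t := by
    rw [ht_def]
    exact mul_pos hCpos (Real.sqrt_pos.mpr harg)
  have ht2 : (N:ℝ) * t^2 = C^2 * d₂ * (1 - δ) / δ := by
    rw [ht_def, mul_pow, Real.sq_sqrt harg.le]
    field_simp
  -- the function g = w * f and its moments under p
  obtain ⟨g, hg_def⟩ : ∃ g : X → ℝ, g = fun c => w c * f c := ⟨_, rfl⟩
  have hgmeas : Measurable g := by rw [hg_def]; exact hwmeas.mul hf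
  have hgbound : ∀ x, g x ^ 2 ≤ C^2 * w x ^ 2 := by
    intro x
    have h1 : |f x| ≤ C := hfC x
    have hf2 : f x ^ 2 ≤ C ^ 2 := by nlinarith [abs_nonneg (f x), sq_abs (f x)]
    have hgx : g x ^ 2 = w x ^2 * f x ^2 := by rw [hg_def]; ring
    rw [hgx]
    nlinarith [sq_nonneg (w x)]
  have hgsq_int : Integrable (fun x => g x ^ 2) p := by
    refine (hd₂fin.const_mul (C^2)).mono (hgmeas.pow_const 2).aestronglyMeasurable
      (ae_of_all _ fun x => ?_)
    rw [Real.norm_eq_abs, Real.norm_eq_abs, abs_of_nonneg (sq_nonneg (g x)),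
      abs_of_nonneg (by positivity : (0:ℝ) ≤ C^2 * w x ^2)]
    exact hgbound x
  have hg2 : MemLp g 2 p :=
    (memLp_two_iff_integrable_sq hgmeas.aestronglyMeasurable).mpr hgsq_int
  have hgm : ∫ x, g x ∂p = m := by
    have h := integral_rnDeriv_smul (E := ℝ) hqp (f := f)
    rw [hg_def, hw, hm_def]
    simpa [smul_eq_mul] using h
  have hgsq_le : ∫ x, g x ^ 2 ∂p ≤ C^2 * d₂ := by
    rw [hd₂, ← integral_const_mul]
    exact integral_mono hgsq_int (hd₂fin.const_mul (C^2)) fun x => hgbound x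
  -- the random variables Y i
  obtain ⟨Y, hY_def⟩ : ∃ Y : Fin N → Ω → ℝ, Y = fun i ω => g (Xs i ω) := ⟨_, rfl⟩
  have hYmem : ∀ i, MemLp (Y i) 2 μ := by
    intro i
    have h : MemLp g 2 (μ.map (Xs i)) := by rw [hlaw i]; exact hg2
    rw [hY_def]
    exact (memLp_map_measure_iff hgmeas.aestronglyMeasurable (hmeas i).aemeasurable).mp h
  have hEY : ∀ i, ∫ ω, Y i ω ∂μ = m := by
    intro i
    rw [hY_def]
    rw [← integral_map (hmeas i).aemeasurable hgmeas.aestronglyMeasurable, hlaw i, hgm]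
  have hEY2 : ∀ i, ∫ ω, Y i ω ^ 2 ∂μ ≤ C^2 * d₂ := by
    intro i
    have h : ∫ ω, Y i ω ^ 2 ∂μ = ∫ x, g x ^ 2 ∂p := by
      rw [hY_def, ← hlaw i,
        integral_map (hmeas i).aemeasurable (hgmeas.pow_const 2).aestronglyMeasurable]
    rw [h]; exact hgsq_le
  have hVarY : ∀ i, ProbabilityTheory.variance (Y i) μ ≤ C^2 * d₂ := by
    intro i
    rw [ProbabilityTheory.variance_eq_sub (hYmem i)]
    have h1 : (∫ ω, (Y i ^ 2) ω ∂μ) = ∫ ω, Y i ω ^ 2 ∂μ := by simp [Pi.pow_apply]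
    have h2 : (0:ℝ) ≤ (∫ ω, Y i ω ∂μ) ^ 2 := sq_nonneg _
    calc (∫ ω, (Y i ^ 2) ω ∂μ) - (∫ ω, Y i ω ∂μ) ^ 2 ≤ ∫ ω, Y i ω ^ 2 ∂μ := by
          rw [h1]; linarith
      _ ≤ C^2 * d₂ := hEY2 i
  -- the sum F
  obtain ⟨F, hF_def⟩ : ∃ F : Ω → ℝ, F = ∑ i, Y i := ⟨_, rfl⟩
  have hFapp : ∀ ω, F ω = ∑ i, Y i ω := by
    intro ω; rw [hF_def]; simp
  have hFmem : MemLp F 2 μ := by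
    rw [hF_def]; exact memLp_finset_sum' _ fun i _ => hYmem i
  have hYindep : ProbabilityTheory.iIndepFun Y μ := by
    rw [hY_def]
    exact hindep.comp (fun _ => g) fun _ => hgmeas
  have hVarF : ProbabilityTheory.variance F μ ≤ N * (C^2 * d₂) := by
    rw [hF_def, ProbabilityTheory.IndepFun.variance_sum (fun i _ => hYmem i)
      (fun i _ j _ hij => hYindep.indepFun hij)]
    calc ∑ i, ProbabilityTheory.variance (Y i) μ ≤ ∑ _i : Fin N, C^2 * d₂ :=
          Finset.sum_le_sum fun i _ => hVarY i
      _ = N * (C^2 * d₂) := by simp [Finset.sum_const, mul_comm]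
  have hEF : ∫ ω, F ω ∂μ = N * m := by
    simp_rw [hFapp]
    rw [integral_finset_sum _ fun i _ => (hYmem i).integrable one_le_two]
    simp [hEY, Finset.sum_const, mul_comm]
  -- Cantelli's inequality setup
  obtain ⟨lam, hlam_def⟩ : ∃ lam : ℝ, lam = δ * N * t / (1 - δ) := ⟨_, rfl⟩
  have hlampos : 0 < lam := by
    rw [hlam_def]
    apply div_pos _ (by linarith)
    positivity
  have hrel : δ * ((N:ℝ) * t) = lam * (1 - δ) := by
    rw [hlam_def, div_mul_cancel₀ _ h1δ]; ring
  have hlamt : lam * t = C^2 * d₂ := by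
    have h1 : lam * t = δ * ((N:ℝ) * t^2) / (1 - δ) := by rw [hlam_def]; ring
    rw [h1, ht2]
    field_simp
  -- the integral bound
  obtain ⟨b, hb_def⟩ : ∃ b : ℝ, b = N * m - lam := ⟨_, rfl⟩
  have hFint : Integrable F μ := hFmem.integrable one_le_two
  have hF2int : Integrable (fun ω => F ω ^ 2) μ := hFmem.integrable_sq
  have hGint : Integrable (fun ω => (F ω - b)^2) μ := by
    have h : MemLp (fun ω => F ω - b) 2 μ := hFmem.sub (memLp_const b)
    exact h.integrable_sq
  have hEG : ∫ ω, (F ω - b)^2 ∂μ = ProbabilityTheory.variance F μ + lam^2 := by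
    have hexpand : ∀ ω, (F ω - b)^2 = F ω^2 - (2*b) * F ω + b^2 := fun ω => by ring
    simp_rw [hexpand]
    have hint1 : Integrable (fun ω => F ω^2 - (2*b) * F ω) μ :=
      hF2int.sub (hFint.const_mul (2*b))
    have hint2 : Integrable (fun ω => (2*b) * F ω) μ := hFint.const_mul (2*b)
    rw [integral_add hint1 (integrable_const _),
      integral_sub hF2int hint2, integral_const_mul, hEF,
      integral_const, probReal_univ]
    rw [ProbabilityTheory.variance_eq_sub hFmem]
    have h1 : (∫ ω, (F ^ 2) ω ∂μ) = ∫ ω, F ω ^ 2 ∂μ := by simp [Pi.pow_apply]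
    have h2 : (∫ ω, F ω ∂μ) = (N:ℝ) * m := hEF
    rw [h1, h2, hb_def]
    simp
    ring
  have hEG_le : ∫ ω, (F ω - b)^2 ∂μ ≤ δ * ((N:ℝ)*t + lam)^2 := by
    rw [hEG]
    have key : (N:ℝ) * (C^2 * d₂) + lam^2 ≤ δ * ((N:ℝ)*t + lam)^2 := by
      have h1 : (N:ℝ) * (C^2 * d₂) = (N:ℝ) * (lam * t) := by rw [hlamt]
      rw [h1]
      have heq : (N:ℝ) * (lam * t) + lam^2 = δ * ((N:ℝ)*t + lam)^2 := by
        linear_combination (-((N:ℝ)*t + lam)) * hrel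
      linarith
    linarith [hVarF]
  -- Markov's inequality
  obtain ⟨ε, hε_def⟩ : ∃ ε : ℝ, ε = ((N:ℝ)*t + lam)^2 := ⟨_, rfl⟩
  have hεpos : 0 < ε := by rw [hε_def]; positivity
  have hmarkov := mul_meas_ge_le_integral_of_nonneg
    (ae_of_all μ fun ω => sq_nonneg (F ω - b)) hGint ε
  have hBle : μ {ω | ε ≤ (F ω - b)^2} ≤ ENNReal.ofReal δ := by
    rw [ENNReal.le_ofReal_iff_toReal_le (measure_ne_top μ _) hδ.le]
    have h2 : (μ {ω | ε ≤ (F ω - b)^2}).toReal ≤ (∫ ω, (F ω - b)^2 ∂μ) / ε :=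
      (le_div_iff₀ hεpos).mpr (by rw [measureReal_def] at hmarkov; linarith [hmarkov])
    have h3 : (∫ ω, (F ω - b)^2 ∂μ) / ε ≤ δ := by
      rw [div_le_iff₀ hεpos]
      calc ∫ ω, (F ω - b)^2 ∂μ ≤ δ * ((N:ℝ)*t + lam)^2 := hEG_le
        _ = δ * ε := by rw [hε_def]
    linarith
  -- the target set
  set A : Set Ω := {ω | (1 / (N : ℝ)) * ∑ i, w (Xs i ω) * f (Xs i ω) - t ≤ m} with hA_def
  have hSmeas : Measurable fun ω => ∑ i, w (Xs i ω) * f (Xs i ω) :=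
    Finset.measurable_sum _ fun i _ => ((hwmeas.comp (hmeas i)).mul (hf.comp (hmeas i)))
  have hAmeas : MeasurableSet A :=
    measurableSet_le ((hSmeas.const_mul _).sub measurable_const) measurable_const
  have hsub : Aᶜ ⊆ {ω | ε ≤ (F ω - b)^2} := by
    intro ω hω
    simp only [hA_def, Set.mem_compl_iff, Set.mem_setOf_eq, not_le] at hω
    have hSsum : F ω = ∑ i, w (Xs i ω) * f (Xs i ω) := by
      rw [hFapp]
      simp [hY_def, hg_def]
    have h1 : (N:ℝ) * t + (N:ℝ) * m < F ω := by
      rw [hSsum]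
      have hlt := (mul_lt_mul_iff_right₀ hNpos).mpr hω
      have h2 : (N:ℝ) * ((1 / (N : ℝ)) * ∑ i, w (Xs i ω) * f (Xs i ω) - t)
          = ∑ i, w (Xs i ω) * f (Xs i ω) - N * t := by
        field_simp
      rw [h2] at hlt
      linarith
    have h2 : (N:ℝ)*t + lam ≤ F ω - b := by rw [hb_def]; linarith
    have h3 : (0:ℝ) ≤ (N:ℝ)*t + lam := by positivity
    show ε ≤ (F ω - b)^2
    rw [hε_def]
    exact pow_le_pow_left₀ h3 h2 2
  have hAc : μ Aᶜ ≤ ENNReal.ofReal δ := le_trans (measure_mono hsub) hBle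
  have hμA : μ A = 1 - μ Aᶜ := by
    rw [prob_compl_eq_one_sub hAmeas,
      ENNReal.sub_sub_cancel ENNReal.one_ne_top prob_le_one]
  show ENNReal.ofReal (1 - δ) ≤ μ A
  rw [hμA]
  have hofr : ENNReal.ofReal (1 - δ) = 1 - ENNReal.ofReal δ := by
    rw [← ENNReal.ofReal_one, ← ENNReal.ofReal_sub _ hδ.le]
  rw [hofr]
  exact tsub_le_tsub_left hAc 1
end

section
/- (Effective sample size estimates the exponentiated Rényi-2 divergence.) Let p and q be probability measures on a measurable space X with q absolutely continuous with respect to p, importance weight w = dq/dp, and finite exponentiated Rényi-2 divergence d₂(q‖p) = ∫ (dq/dp)² dp, and assume d₂(q‖p) > 0. Let X₁, X₂, … be i.i.d. random variables with law p. Then almost surely, (1/N) · (Σ_{n=1}^N w(X_n))² / (Σ_{n=1}^N w(X_n)²) converges to 1 / d₂(q‖p) as N → ∞. -/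
open MeasureTheory Filter

/-- The effective sample size estimates the exponentiated Rényi-2 divergence: for `q ≪ p`
with importance weight `w = dq/dp` and finite, positive `d₂(q‖p) = ∫ w² dp`, and i.i.d.
samples `X₁, X₂, …` from `p`, almost surely
`(1/N) (∑_{n<N} w(Xₙ))² / (∑_{n<N} w(Xₙ)²) → 1 / d₂(q‖p)` as `N → ∞`. -/
theorem effective_sample_size_estimates_renyi2
    {X : Type*} [mX : MeasurableSpace X] (p q : Measure X)
    [IsProbabilityMeasure p] [IsProbabilityMeasure q] (hqp : q ≪ p)
    (w : X → ℝ) (hw : w = fun x => (q.rnDeriv p x).toReal)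
    (d₂ : ℝ) (hd₂ : d₂ = ∫ x, (w x) ^ 2 ∂p)
    (hd₂fin : Integrable (fun x => (w x) ^ 2) p) (hd₂pos : 0 < d₂)
    {Ω : Type*} [MeasurableSpace Ω] (μ : Measure Ω) [IsProbabilityMeasure μ]
    (Xs : ℕ → Ω → X) (hmeas : ∀ n, Measurable (Xs n))
    (hindep : ProbabilityTheory.iIndepFun Xs μ)
    (hlaw : ∀ n, μ.map (Xs n) = p) :
    ∀ᵐ ω ∂μ, Tendsto
      (fun N : ℕ => (1 / (N : ℝ)) *
        (∑ n ∈ Finset.range N, w (Xs n ω)) ^ 2 / (∑ n ∈ Finset.range N, (w (Xs n ω)) ^ 2))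
      atTop (nhds (1 / d₂)) := by
  have hwmeas : Measurable w := by
    rw [hw]; exact (Measure.measurable_rnDeriv q p).ennreal_toReal
  have hw2meas : Measurable (fun x => (w x) ^ 2) := hwmeas.pow_const 2
  -- identical distribution of the samples
  have hident : ∀ n, ProbabilityTheory.IdentDistrib (Xs n) (Xs 0) μ μ := fun n =>
    ⟨(hmeas n).aemeasurable, (hmeas 0).aemeasurable, by rw [hlaw n, hlaw 0]⟩
  -- the two sequences of real random variables
  set Y : ℕ → Ω → ℝ := fun n ω => w (Xs n ω) with hY
  set Z : ℕ → Ω → ℝ := fun n ω => (w (Xs n ω)) ^ 2 with hZ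
  have hYindep : Pairwise (Function.onFun (ProbabilityTheory.IndepFun · · μ) Y) := fun i j hij =>
    (hindep.indepFun hij).comp hwmeas hwmeas
  have hZindep : Pairwise (Function.onFun (ProbabilityTheory.IndepFun · · μ) Z) := fun i j hij =>
    (hindep.indepFun hij).comp hw2meas hw2meas
  have hYident : ∀ n, ProbabilityTheory.IdentDistrib (Y n) (Y 0) μ μ := fun n =>
    (hident n).comp hwmeas
  have hZident : ∀ n, ProbabilityTheory.IdentDistrib (Z n) (Z 0) μ μ := fun n =>
    (hident n).comp hw2meas
  -- integrability
  have hwint : Integrable w p := by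
    rw [hw]; exact Measure.integrable_toReal_rnDeriv
  have hYint : Integrable (Y 0) μ := by
    have := (integrable_map_measure hwmeas.aestronglyMeasurable
      (hmeas 0).aemeasurable).mp (by rw [hlaw 0]; exact hwint)
    exact this
  have hZint : Integrable (Z 0) μ := by
    have := (integrable_map_measure hw2meas.aestronglyMeasurable
      (hmeas 0).aemeasurable).mp (by rw [hlaw 0]; exact hd₂fin)
    exact this
  -- the two integrals
  have hEY : (∫ ω, Y 0 ω ∂μ) = 1 := by
    rw [hY]
    rw [← integral_map (hmeas 0).aemeasurable hwmeas.aestronglyMeasurable, hlaw 0, hw,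
      Measure.integral_toReal_rnDeriv hqp]
    simp
  have hEZ : (∫ ω, Z 0 ω ∂μ) = d₂ := by
    rw [hZ, hd₂]
    rw [← integral_map (hmeas 0).aemeasurable hw2meas.aestronglyMeasurable, hlaw 0]
  have h1 := ProbabilityTheory.strong_law_ae_real Y hYint hYindep hYident
  have h2 := ProbabilityTheory.strong_law_ae_real Z hZint hZindep hZident
  rw [hEY] at h1
  rw [hEZ] at h2
  filter_upwards [h1, h2] with ω h1 h2
  have hd₂ne : d₂ ≠ 0 := ne_of_gt hd₂pos
  have hlim : Tendsto (fun N : ℕ =>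
      ((∑ n ∈ Finset.range N, Y n ω) / N) ^ 2 / ((∑ n ∈ Finset.range N, Z n ω) / N))
      atTop (nhds (1 / d₂)) := by
    have := (h1.pow 2).div h2 hd₂ne
    simpa [Pi.div_def] using this
  refine hlim.congr' ?_
  filter_upwards [eventually_gt_atTop 0] with N hN
  have hNne : (N : ℝ) ≠ 0 := Nat.cast_ne_zero.mpr hN.ne'
  set S := ∑ n ∈ Finset.range N, Y n ω
  set T := ∑ n ∈ Finset.range N, Z n ω
  show (S / N) ^ 2 / (T / N) = 1 / (N : ℝ) * S ^ 2 / T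
  rcases eq_or_ne T 0 with hT | hT
  · simp [hT]
  · field_simp
end

section
/- Let N ≥ 1 and let r₁, …, r_N be real numbers with r_n ≤ 0 for all n. Then the function g(α) = √(Σ_{n=1}^N exp(2·α·r_n)) is convex in α on the interval [0, ∞): for all α, β ≥ 0 and θ ∈ [0, 1], g(θα + (1−θ)β) ≤ θ·g(α) + (1−θ)·g(β). -/
/-- For nonpositive returns `r₁, …, r_N`, the penalty term
`g(α) = √(∑ₙ exp(2 α rₙ))` of the lower-bound policy search objective is convex
in `α` on `[0, ∞)`. -/
theorem lbps_penalty_convex (N : ℕ) (hN : 1 ≤ N) (r : Fin N → ℝ) (hr : ∀ n, r n ≤ 0) :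
    ConvexOn ℝ (Set.Ici (0 : ℝ))
      (fun α : ℝ => Real.sqrt (∑ n, Real.exp (2 * α * r n))) := by
  set F : ℝ → EuclideanSpace ℝ (Fin N) := fun α => WithLp.toLp 2 (fun n => Real.exp (α * r n)) with hF
  have key : ∀ α : ℝ, Real.sqrt (∑ n, Real.exp (2 * α * r n)) = ‖F α‖ := by
    intro α
    rw [EuclideanSpace.norm_eq]
    congr 1
    refine Finset.sum_congr rfl fun n _ => ?_
    have : ‖F α n‖ ^ 2 = Real.exp (α * r n) ^ 2 := by
      simp [hF, Real.norm_eq_abs, sq_abs]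
    rw [this, sq, ← Real.exp_add]
    ring_nf
  refine ⟨convex_Ici 0, fun x hx y hy a b ha hb hab => ?_⟩
  simp only [smul_eq_mul, key]
  have hpt : ∀ n, F (a * x + b * y) n ≤ (a • F x + b • F y) n := by
    intro n
    have := (convexOn_exp.2 (Set.mem_univ (x * r n)) (Set.mem_univ (y * r n)) ha hb hab)
    simp only [smul_eq_mul] at this ⊢
    calc Real.exp ((a * x + b * y) * r n)
        = Real.exp (a * (x * r n) + b * (y * r n)) := by ring_nf
      _ ≤ a * Real.exp (x * r n) + b * Real.exp (y * r n) := this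
      _ = a * F x n + b * F y n := rfl
  have h1 : ‖F (a * x + b * y)‖ ≤ ‖a • F x + b • F y‖ := by
    rw [EuclideanSpace.norm_eq, EuclideanSpace.norm_eq]
    apply Real.sqrt_le_sqrt
    refine Finset.sum_le_sum fun n _ => ?_
    simp only [Real.norm_eq_abs, sq_abs]
    exact pow_le_pow_left₀ (Real.exp_pos _).le (hpt n) 2
  have h2 : ‖a • F x + b • F y‖ ≤ a * ‖F x‖ + b * ‖F y‖ := by
    calc ‖a • F x + b • F y‖ ≤ ‖a • F x‖ + ‖b • F y‖ := norm_add_le _ _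
      _ = a * ‖F x‖ + b * ‖F y‖ := by
          rw [norm_smul, norm_smul, Real.norm_eq_abs, Real.norm_eq_abs,
            abs_of_nonneg ha, abs_of_nonneg hb]
  exact h1.trans h2
end
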